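/- (Lemma 1) For any vector a ∈ ℝ^K of nonnegative numbers and any permutation π of {1,…,K}, wowa_{(v,p)}(a) ≥ f_π(a), where f_π(a) = Σ_{j=1}^K ω_j^π a_{π(j)} with ω_j^π = w*(Σ_{i≤j} p_{π(i)}) − w*(Σ_{i<j} p_{π(i)}). That is, among all permutations, the nonincreasing ordering of a maximizes the WOWA-type weighted sum. -/

import Mathlib

open Finset

/-- The piecewise linear function `w*` induced by the weight vector `v`:
`w*(0)=0`, `w*(j/K) = ∑_{i≤j} v i`, linear on each `[(j-1)/K, j/K]`. -/
noncomputable def wstar (K : ℕ) (v : Fin K → ℝ) (t : ℝ) : ℝ :=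
  ∑ i : Fin K, v i * min 1 (max 0 (t * (K : ℝ) - (i.1 : ℝ)))

/-- extension of `v : Fin K → ℝ` by zero -/
noncomputable def vext (K : ℕ) (v : Fin K → ℝ) (n : ℕ) : ℝ :=
  if h : n < K then v ⟨n, h⟩ else 0

lemma clamp_sum (N : ℕ) (s : ℝ) (hs : 0 ≤ s) :
    ∑ m ∈ Finset.range N, min 1 (max 0 (s - m)) = min (N : ℝ) s := by
  induction N with
  | zero => simp [hs]
  | succ N ih =>
    rw [Finset.sum_range_succ, ih]
    rcases le_total s N with h | h
    · have : max 0 (s - N) = 0 := by rw [max_eq_left]; linarith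
      rw [this]
      push_cast
      rcases le_total (1:ℝ) 0 with h1 | h1 <;> simp [min_def] <;> split_ifs <;> linarith
    · push_cast
      simp only [min_def, max_def]
      split_ifs <;> linarith

lemma abel_helper (N : ℕ) (g c : ℕ → ℝ) :
    ∑ n ∈ Finset.range N, g n * c n
      = (∑ n ∈ Finset.range N, (g n - g (n+1)) * (∑ m ∈ Finset.range (n+1), c m))
        + g N * ∑ m ∈ Finset.range N, c m := by
  induction N with
  | zero => simp
  | succ N ih =>
    rw [Finset.sum_range_succ, ih, Finset.sum_range_succ (f := fun n =>
      (g n - g (n+1)) * (∑ m ∈ Finset.range (n+1), c m)), Finset.sum_range_succ c]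
    ring

lemma tele1 (N j : ℕ) (G : ℕ → ℝ) :
    ∑ n ∈ Finset.range N, (if j ≤ n then G n - G (n+1) else 0)
      = if j ≤ N then G j - G N else 0 := by
  induction N with
  | zero => split_ifs with h <;> simp_all
  | succ N ih =>
    rw [Finset.sum_range_succ, ih]
    rcases Nat.lt_trichotomy j N with h | h | h
    · rw [if_pos h.le, if_pos (by omega), if_pos (by omega)]; ring
    · subst h; rw [if_pos le_rfl, if_pos le_rfl, if_pos (by omega)]; ring
    · rw [if_neg (by omega), if_neg (by omega)]
      split_ifs with h2
      · have : j = N + 1 := by omega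
        subst this; ring
      · ring

lemma tele2 (N m : ℕ) (G : ℕ → ℝ) :
    ∑ n ∈ Finset.range N, (if n < m then G (n+1) - G n else 0)
      = G (min m N) - G 0 := by
  induction N with
  | zero => simp
  | succ N ih =>
    rw [Finset.sum_range_succ, ih]
    rcases le_or_gt m N with h | h
    · rw [if_neg (by omega), min_eq_left (by omega), min_eq_left (by omega)]; ring
    · rw [if_pos h, min_eq_right (by omega), min_eq_right (by omega)]; ring

lemma min_increment {c X Y H : ℝ} (hYX : Y ≤ X) (hH : 0 ≤ H) :
    min c (X + H) - min c X ≤ min c (Y + H) - min c Y := by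
  simp only [min_def]; split_ifs <;> linarith

lemma wstar_eq (K : ℕ) (v : Fin K → ℝ) (t : ℝ) (ht : 0 ≤ t) :
    wstar K v t = ∑ n ∈ Finset.range K,
      (vext K v n - vext K v (n+1)) * min ((n:ℝ)+1) (t * K) := by
  have h1 : wstar K v t
      = ∑ n ∈ Finset.range K, vext K v n * min 1 (max 0 (t * K - n)) := by
    rw [wstar, ← Fin.sum_univ_eq_sum_range (fun n => vext K v n * min 1 (max 0 (t * K - n)))]
    refine Finset.sum_congr rfl fun i _ => ?_
    rw [vext, dif_pos i.isLt]
  rw [h1, abel_helper K (vext K v) (fun n => min 1 (max 0 (t * K - n)))]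
  rw [vext, dif_neg (lt_irrefl K), zero_mul, add_zero]
  refine Finset.sum_congr rfl fun n _ => ?_
  rw [clamp_sum (n+1) (t * K) (by positivity)]
  push_cast
  ring_nf

lemma vext_step_nonneg (K : ℕ) (v : Fin K → ℝ) (hv0 : ∀ j, 0 ≤ v j)
    (hvmono : ∀ i j : Fin K, i ≤ j → v j ≤ v i) (n : ℕ) :
    0 ≤ vext K v n - vext K v (n+1) := by
  unfold vext
  split_ifs with h1 h2 h2
  · have := hvmono ⟨n, h1⟩ ⟨n+1, h2⟩ (by simp [Fin.le_def])
    linarith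
  · simpa using hv0 ⟨n, h1⟩
  · omega
  · simp

lemma wstar_zero (K : ℕ) (v : Fin K → ℝ) : wstar K v 0 = 0 := by
  unfold wstar
  refine Finset.sum_eq_zero fun i _ => ?_
  have : max 0 (0 * (K:ℝ) - i.1) = 0 := by
    rw [max_eq_left]; simp
  rw [this]
  simp

lemma wstar_increment (K : ℕ) (v : Fin K → ℝ) (hv0 : ∀ j, 0 ≤ v j)
    (hvmono : ∀ i j : Fin K, i ≤ j → v j ≤ v i)
    {x y h : ℝ} (hy : 0 ≤ y) (hyx : y ≤ x) (hh : 0 ≤ h) :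
    wstar K v (x + h) - wstar K v x ≤ wstar K v (y + h) - wstar K v y := by
  have hx : 0 ≤ x := le_trans hy hyx
  rw [wstar_eq K v (x+h) (by linarith), wstar_eq K v x hx,
      wstar_eq K v (y+h) (by linarith), wstar_eq K v y hy,
      ← Finset.sum_sub_distrib, ← Finset.sum_sub_distrib]
  refine Finset.sum_le_sum fun n _ => ?_
  rw [← mul_sub, ← mul_sub]
  refine mul_le_mul_of_nonneg_left ?_ (vext_step_nonneg K v hv0 hvmono n)
  have h1 : (x + h) * K = x * K + h * K := by ring
  have h2 : (y + h) * K = y * K + h * K := by ring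
  rw [h1, h2]
  exact min_increment (mul_le_mul_of_nonneg_right hyx (Nat.cast_nonneg K))
    (mul_nonneg hh (Nat.cast_nonneg K))

/-- The WOWA weight `ω_j = w*(∑_{i≤j} p_{σ(i)}) - w*(∑_{i<j} p_{σ(i)})`. -/
noncomputable def wowaWeight (K : ℕ) (v p : Fin K → ℝ) (σ : Equiv.Perm (Fin K))
    (j : Fin K) : ℝ :=
  wstar K v (∑ i ∈ Finset.Iic j, p (σ i)) - wstar K v (∑ i ∈ Finset.Iio j, p (σ i))

lemma weight_sum_le (K : ℕ) (v p : Fin K → ℝ) (hv0 : ∀ j, 0 ≤ v j)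
    (hvmono : ∀ i j : Fin K, i ≤ j → v j ≤ v i) (hp0 : ∀ j, 0 < p j)
    (π : Equiv.Perm (Fin K)) (S : Finset (Fin K)) :
    ∑ j ∈ S, wowaWeight K v p π j ≤ wstar K v (∑ j ∈ S, p (π j)) := by
  classical
  induction S using Finset.induction_on_max with
  | empty => simp [wstar_zero]
  | insert m S hmax ih =>
    have hmS : m ∉ S := fun h => lt_irrefl m (hmax m h)
    rw [Finset.sum_insert hmS, Finset.sum_insert hmS]
    have hIic : (∑ i ∈ Finset.Iic m, p (π i))
        = (∑ i ∈ Finset.Iio m, p (π i)) + p (π m) := by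
      rw [← Finset.Iio_insert m, Finset.sum_insert (by simp)]
      ring
    have hy0 : 0 ≤ ∑ j ∈ S, p (π j) :=
      Finset.sum_nonneg fun j _ => (hp0 (π j)).le
    have hyx : (∑ j ∈ S, p (π j)) ≤ ∑ i ∈ Finset.Iio m, p (π i) := by
      refine Finset.sum_le_sum_of_subset_of_nonneg ?_ fun i _ _ => (hp0 (π i)).le
      intro x hx
      exact Finset.mem_Iio.mpr (hmax x hx)
    have hinc := wstar_increment K v hv0 hvmono hy0 hyx (hp0 (π m)).le
    have h1 : wowaWeight K v p π m
        ≤ wstar K v ((∑ j ∈ S, p (π j)) + p (π m)) - wstar K v (∑ j ∈ S, p (π j)) := by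
      rw [wowaWeight, hIic]
      exact hinc
    have h2 : p (π m) + ∑ j ∈ S, p (π j) = (∑ j ∈ S, p (π j)) + p (π m) := by ring
    rw [h2]
    linarith

lemma weight_sum_Iic (K : ℕ) (v p : Fin K → ℝ) (π : Equiv.Perm (Fin K)) (k : Fin K) :
    ∑ j ∈ Finset.Iic k, wowaWeight K v p π j
      = wstar K v (∑ i ∈ Finset.Iic k, p (π i)) := by
  classical
  set Q : ℕ → ℝ := fun n => ∑ i : Fin K, (if (i : ℕ) < n then p (π i) else 0) with hQ
  have hQIic : ∀ j : Fin K, (∑ i ∈ Finset.Iic j, p (π i)) = Q (j.1 + 1) := by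
    intro j
    show _ = ∑ i : Fin K, (if (i : ℕ) < j.1 + 1 then p (π i) else 0)
    rw [← Finset.sum_filter]
    congr 1
    ext i
    simp only [Finset.mem_filter, Finset.mem_univ, true_and, Finset.mem_Iic,
      Fin.le_def, Nat.lt_succ_iff]
  have hQIio : ∀ j : Fin K, (∑ i ∈ Finset.Iio j, p (π i)) = Q j.1 := by
    intro j
    show _ = ∑ i : Fin K, (if (i : ℕ) < j.1 then p (π i) else 0)
    rw [← Finset.sum_filter]
    congr 1
    ext i
    simp only [Finset.mem_filter, Finset.mem_univ, true_and, Finset.mem_Iio, Fin.lt_def]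
  have h1 : ∑ j ∈ Finset.Iic k, wowaWeight K v p π j
      = ∑ j : Fin K, (fun n => if n < k.1 + 1 then
          wstar K v (Q (n+1)) - wstar K v (Q n) else 0) j.1 := by
    rw [← Finset.sum_filter]
    have he : Finset.univ.filter (fun j : Fin K => (j : ℕ) < k.1 + 1) = Finset.Iic k := by
      ext i
      simp only [Finset.mem_filter, Finset.mem_univ, true_and, Finset.mem_Iic,
        Fin.le_def, Nat.lt_succ_iff]
    rw [he]
    refine Finset.sum_congr rfl fun j hj => ?_
    have hjk : j ≤ k := Finset.mem_Iic.mp hj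
    have hjk' : (j:ℕ) < k.1 + 1 := by
      have := Fin.le_def.mp hjk; omega
    rw [wowaWeight, hQIic j, hQIio j]
  rw [h1, Fin.sum_univ_eq_sum_range (fun n => if n < k.1 + 1 then
      wstar K v (Q (n+1)) - wstar K v (Q n) else 0),
    tele2 K (k.1+1) (fun n => wstar K v (Q n))]
  have hQ0 : Q 0 = 0 := by simp [hQ]
  have hmin : min (k.1 + 1) K = k.1 + 1 := by
    have := k.isLt; omega
  rw [hmin, hQ0, wstar_zero, hQIic k]
  ring

/-- The WOWA aggregation of `a` relative to a permutation `σ`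
(sorting `a` nonincreasingly gives the WOWA value). -/
noncomputable def wowaW (K : ℕ) (v p : Fin K → ℝ) (σ : Equiv.Perm (Fin K))
    (a : Fin K → ℝ) : ℝ :=
  ∑ j : Fin K, wowaWeight K v p σ j * a (σ j)

/-- Lemma 1: the nonincreasing ordering maximizes the
WOWA-type weighted sum: wowa(a) ≥ f_π(a) for any permutation π. -/
theorem wowa_ge_fpi (K : ℕ) (v p : Fin K → ℝ)
    (hv0 : ∀ j, 0 ≤ v j) (hvs : ∑ j, v j = 1)
    (hvmono : ∀ i j : Fin K, i ≤ j → v j ≤ v i)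
    (hp0 : ∀ j, 0 < p j) (hps : ∑ j, p j = 1)
    (a : Fin K → ℝ) (ha : ∀ j, 0 ≤ a j)
    (σ π : Equiv.Perm (Fin K))
    (hσ : ∀ i j : Fin K, i ≤ j → a (σ j) ≤ a (σ i)) :
    wowaW K v p π a ≤ wowaW K v p σ a := by

  classical
  set aN : ℕ → ℝ := fun n => if h : n < K then a (σ ⟨n, h⟩) else 0 with haN
  -- levels are nonnegative
  have hd0 : ∀ k : Fin K, 0 ≤ aN k.1 - aN (k.1 + 1) := by
    intro k
    rw [haN]
    simp only
    rw [dif_pos k.isLt]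
    split_ifs with h
    · have := hσ k ⟨k.1 + 1, h⟩ (by simp [Fin.le_def])
      simp only [Fin.eta] at this ⊢
      linarith
    · have := ha (σ k)
      simp only [Fin.eta]
      linarith
  -- layer-cake representation of a
  have hId : ∀ j : Fin K, a (σ j)
      = ∑ k : Fin K, (if j ≤ k then aN k.1 - aN (k.1 + 1) else 0) := by
    intro j
    have hc : ∀ k : Fin K, (if j ≤ k then aN k.1 - aN (k.1 + 1) else 0)
        = (fun n => if j.1 ≤ n then aN n - aN (n + 1) else 0) k.1 := by
      intro k
      simp only [Fin.le_def]
    rw [Finset.sum_congr rfl fun k _ => hc k,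
      Fin.sum_univ_eq_sum_range (fun n => if j.1 ≤ n then aN n - aN (n + 1) else 0),
      tele1 K j.1 aN, if_pos j.isLt.le]
    rw [haN]
    simp only
    rw [dif_pos j.isLt, dif_neg (lt_irrefl K)]
    simp
  -- rearranged double-sum representation of the WOWA value
  have key : ∀ τ : Equiv.Perm (Fin K),
      wowaW K v p τ a = ∑ k : Fin K,
        (∑ j : Fin K, (if σ.symm (τ j) ≤ k then wowaWeight K v p τ j else 0))
          * (aN k.1 - aN (k.1 + 1)) := by
    intro τ
    rw [wowaW]
    have h1 : ∀ j : Fin K, a (τ j)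
        = ∑ k : Fin K, (if σ.symm (τ j) ≤ k then aN k.1 - aN (k.1 + 1) else 0) := by
      intro j
      rw [← hId (σ.symm (τ j)), Equiv.apply_symm_apply]
    calc ∑ j : Fin K, wowaWeight K v p τ j * a (τ j)
        = ∑ j : Fin K, ∑ k : Fin K, (if σ.symm (τ j) ≤ k then
            wowaWeight K v p τ j * (aN k.1 - aN (k.1 + 1)) else 0) := by
          refine Finset.sum_congr rfl fun j _ => ?_
          rw [h1 j, Finset.mul_sum]
          refine Finset.sum_congr rfl fun k _ => ?_
          rw [mul_ite, mul_zero]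
      _ = ∑ k : Fin K, ∑ j : Fin K, (if σ.symm (τ j) ≤ k then
            wowaWeight K v p τ j * (aN k.1 - aN (k.1 + 1)) else 0) := Finset.sum_comm
      _ = ∑ k : Fin K,
            (∑ j : Fin K, (if σ.symm (τ j) ≤ k then wowaWeight K v p τ j else 0))
              * (aN k.1 - aN (k.1 + 1)) := by
          refine Finset.sum_congr rfl fun k _ => ?_
          rw [Finset.sum_mul]
          refine Finset.sum_congr rfl fun j _ => ?_
          rw [ite_mul, zero_mul]
  rw [key σ, key π]
  refine Finset.sum_le_sum fun k _ => ?_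
  refine mul_le_mul_of_nonneg_right ?_ (hd0 k)
  -- σ side: equals wstar of the Iic sum
  have hσside : (∑ j : Fin K, (if σ.symm (σ j) ≤ k then wowaWeight K v p σ j else 0))
      = wstar K v (∑ i ∈ Finset.Iic k, p (σ i)) := by
    rw [← weight_sum_Iic K v p σ k, ← Finset.sum_filter]
    congr 1
    ext j
    simp
  rw [hσside]
  -- π side
  set T : Finset (Fin K) := Finset.univ.filter (fun j => σ.symm (π j) ≤ k) with hT
  have hπside : (∑ j : Fin K, (if σ.symm (π j) ≤ k then wowaWeight K v p π j else 0))
      = ∑ j ∈ T, wowaWeight K v p π j := by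
    rw [hT, Finset.sum_filter]
  rw [hπside]
  refine le_trans (weight_sum_le K v p hv0 hvmono hp0 π T) ?_
  -- the total p-mass of T equals that of Iic k
  have hmass : (∑ j ∈ T, p (π j)) = ∑ i ∈ Finset.Iic k, p (σ i) := by
    have himg : T.image (fun j => σ.symm (π j)) = Finset.Iic k := by
      ext i
      simp only [Finset.mem_image, hT, Finset.mem_filter, Finset.mem_univ, true_and,
        Finset.mem_Iic]
      constructor
      · rintro ⟨j, hj, rfl⟩; exact hj
      · intro hi
        exact ⟨π.symm (σ i), by simp [hi], by simp⟩
    rw [← himg, Finset.sum_image (by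
      intro x hx y hy hxy
      have := congrArg (fun z => π.symm (σ z)) hxy
      simpa using this)]
    refine Finset.sum_congr rfl fun j _ => ?_
    rw [Equiv.apply_symm_apply]
  rw [hmass]
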